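/- Let H be the 4×4 complex Hermitian matrix with rows (2, −i, 0, 2i), (i, 4, 2i, 0), (0, −2i, 2, −i), (−2i, 0, i, 4). Then there exists no real symmetric 4×4 matrix Δ such that both Δ − iΩ₂ and H − Δ are positive semidefinite. (Consequently, the Werner–Wolf bound entangled Gaussian state of 2+2 modes is not 2-extendible on the B system.) -/

import Mathlib

open Matrix Complex ComplexOrder

/-- The standard symplectic form on two modes. -/
noncomputable def Omega2 : Matrix (Fin 4) (Fin 4) ℝ :=
  !![0, 1, 0, 0; -1, 0, 0, 0; 0, 0, 0, 1; 0, 0, -1, 0]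

/-- The matrix `H = 2(γ_B − X_γᵀ(γ_A − iΩ₂)⁻¹X_γ) − iΩ₂` from the Werner–Wolf state. -/
noncomputable def HWW : Matrix (Fin 4) (Fin 4) ℂ :=
  !![2, -Complex.I, 0, 2*Complex.I;
     Complex.I, 4, 2*Complex.I, 0;
     0, -2*Complex.I, 2, -Complex.I;
     -2*Complex.I, 0, Complex.I, 4]

/-- There is no real symmetric `Δ` with `iΩ₂ ≤ Δ ≤ H`; consequently the Werner–Wolf
bound entangled Gaussian state of `2+2` modes is not 2-extendible on `B`. -/
theorem wernerWolf_not_two_extendible :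
    ¬ ∃ Δ : Matrix (Fin 4) (Fin 4) ℝ, Δ.IsSymm ∧
      (Δ.map (fun x => (x : ℂ)) - Complex.I • Omega2.map (fun x => (x : ℂ))).PosSemidef ∧
      (HWW - Δ.map (fun x => (x : ℂ))).PosSemidef := by
  rintro ⟨Δ, hsym, h1, h2⟩
  have r1 := (Complex.le_def.mp (h1.dotProduct_mulVec_nonneg ![7, -5*Complex.I, 0, 0])).1
  have r2 := (Complex.le_def.mp (h1.dotProduct_mulVec_nonneg ![0, 0, 7, -5*Complex.I])).1
  have r3 := (Complex.le_def.mp (h2.dotProduct_mulVec_nonneg ![49, 31-15*Complex.I, 49*Complex.I, 15+31*Complex.I])).1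
  have r4 := (Complex.le_def.mp (h2.dotProduct_mulVec_nonneg ![49, -31-15*Complex.I, -49*Complex.I, -15+31*Complex.I])).1
  have r5 := (Complex.le_def.mp (h2.dotProduct_mulVec_nonneg ![0, 1, 0, Complex.I])).1
  have r6 := (Complex.le_def.mp (h2.dotProduct_mulVec_nonneg ![0, 1, 0, -Complex.I])).1
  simp [Omega2, HWW, dotProduct, mulVec, Fin.sum_univ_four, Matrix.map_apply] at r1 r2 r3 r4 r5 r6
  ring_nf at r1 r2 r3 r4 r5 r6
  have e01 := hsym.apply 0 1
  have e02 := hsym.apply 0 2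
  have e03 := hsym.apply 0 3
  have e12 := hsym.apply 1 2
  have e13 := hsym.apply 1 3
  have e23 := hsym.apply 2 3
  linarith
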